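/- For m ≥ 1 and n ≥ 1, the number of random walk labelings of the (m,n)-lollipop graph is L(L_{m,n}) = (m-1)!\left(\binom{m+n}{n+1} + \sum_{k=0}^{n-1}\binom{m+n-1}{k+m}\right). -/

import Mathlib

open Finset

/-- A sequence of `k` distinct vertices of `G` such that every vertex other than the
first is adjacent to some earlier vertex (a random walk labeling disrupted after the
`k`-th vertex). -/
def IsRWLPrefix {V : Type*} (G : SimpleGraph V) {k : ℕ} (v : Fin k → V) : Prop :=
  Function.Injective v ∧ ∀ i : Fin k, i.val ≠ 0 → ∃ j : Fin k, j < i ∧ G.Adj (v j) (v i)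

/-- `L_k(G)`: the number of random walk labelings of `G` disrupted after the `k`-th
vertex.  For `k = 0` this equals `1` (the empty sequence). -/
noncomputable def rwlPrefixCount {V : Type*} (G : SimpleGraph V) (k : ℕ) : ℕ :=
  Nat.card {v : Fin k → V // IsRWLPrefix G v}

/-- `L(G)`: the number of random walk labelings of `G`, i.e. orderings of all the
vertices of `G` in which every vertex other than the first is adjacent to some
earlier vertex. -/
noncomputable def rwlCount {V : Type*} (G : SimpleGraph V) [Fintype V] : ℕ :=
  rwlPrefixCount G (Fintype.card V)

/-- The graph obtained from the disjoint union of `G` and `H` by joining the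
vertex `a` of `G` to the vertex `b` of `H` by an edge (a bridge). -/
def bridgeJoin {V W : Type*} (G : SimpleGraph V) (H : SimpleGraph W) (a : V) (b : W) :
    SimpleGraph (V ⊕ W) :=
  SimpleGraph.fromRel (fun x y =>
    match x, y with
    | Sum.inl u, Sum.inl v => G.Adj u v
    | Sum.inr u, Sum.inr v => H.Adj u v
    | Sum.inl u, Sum.inr v => u = a ∧ v = b
    | Sum.inr _, Sum.inl _ => False)


open Finset Sum SimpleGraph

namespace RWL

def zz (M N : ℕ) (hM : 1 ≤ M) : Fin (M + N) := ⟨0, by omega⟩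

def Pd {V : Type*} (G : SimpleGraph V) {N : ℕ} (e : Fin N ≃ V) : Prop :=
  ∀ i : Fin N, i.val ≠ 0 → ∃ j : Fin N, j < i ∧ G.Adj (e j) (e i)

noncomputable def funEquivEquiv {V : Type*} [Fintype V] [DecidableEq V] {N : ℕ}
    (G : SimpleGraph V) (h : Fintype.card V = N) :
    {v : Fin N → V // IsRWLPrefix G v} ≃ {e : Fin N ≃ V // Pd G e} where
  toFun x := ⟨Equiv.ofBijective x.1
      ((Fintype.bijective_iff_injective_and_card x.1).mpr ⟨x.2.1, by simp [h]⟩), x.2.2⟩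
  invFun e := ⟨⇑e.1, e.1.injective, e.2⟩
  left_inv x := Subtype.ext rfl
  right_inv e := Subtype.ext (Equiv.ext fun x => rfl)

lemma rwlCount_eq_card {V : Type*} [Fintype V] [DecidableEq V] {N : ℕ}
    (G : SimpleGraph V) (h : Fintype.card V = N) :
    rwlCount G = Nat.card {e : Fin N ≃ V // Pd G e} := by
  rw [rwlCount, h, rwlPrefixCount]
  exact Nat.card_congr (funEquivEquiv G h)

variable {m n : ℕ}

def GG (hm : 1 ≤ m) (hn : 1 ≤ n) : SimpleGraph (Fin m ⊕ Fin n) :=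
  bridgeJoin (⊤ : SimpleGraph (Fin m)) (SimpleGraph.pathGraph n) ⟨0, hm⟩ ⟨0, hn⟩

variable (hm : 1 ≤ m) (hn : 1 ≤ n)

lemma adj_inl_inl {u v : Fin m} : (GG hm hn).Adj (inl u) (inl v) ↔ u ≠ v := by
  simp [GG, bridgeJoin, SimpleGraph.fromRel_adj]; tauto

lemma adj_inl_inr {u : Fin m} {v : Fin n} :
    (GG hm hn).Adj (inl u) (inr v) ↔ u = ⟨0, hm⟩ ∧ v = ⟨0, hn⟩ := by
  simp [GG, bridgeJoin, SimpleGraph.fromRel_adj]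

lemma adj_inr_inl {u : Fin m} {v : Fin n} :
    (GG hm hn).Adj (inr v) (inl u) ↔ u = ⟨0, hm⟩ ∧ v = ⟨0, hn⟩ := by
  rw [SimpleGraph.adj_comm]; exact adj_inl_inr hm hn

lemma adj_inr_inr {u v : Fin n} :
    (GG hm hn).Adj (inr u) (inr v) ↔ u.val + 1 = v.val ∨ v.val + 1 = u.val := by
  simp [GG, bridgeJoin, SimpleGraph.fromRel_adj, SimpleGraph.pathGraph_adj]
  constructor
  · rintro ⟨h, h2⟩; tauto
  · intro h; refine ⟨?_, by tauto⟩; rintro rfl; omega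

variable (e : Fin (m + n) ≃ (Fin m ⊕ Fin n))

def CondA : Prop :=
  (∃ c, e (zz m n hm) = inl c) ∧ StrictMono (fun q : Fin n => e.symm (inr q)) ∧
    e.symm (inl ⟨0, hm⟩) < e.symm (inr ⟨0, hn⟩)

def CondB : Prop :=
  ∃ p : Fin n, e (zz m n hm) = inr p ∧
    (∀ q q' : Fin n, p ≤ q → q < q' → e.symm (inr q) < e.symm (inr q')) ∧
    (∀ q q' : Fin n, q < q' → q' ≤ p → e.symm (inr q') < e.symm (inr q)) ∧
    e.symm (inr ⟨0, hn⟩) < e.symm (inl ⟨0, hm⟩) ∧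
    (∀ c : Fin m, c ≠ ⟨0, hm⟩ → e.symm (inl ⟨0, hm⟩) < e.symm (inl c))

variable {hm hn e}

lemma keyR (hP : Pd (GG hm hn) e) {p : Fin n}
    (hmin : ∀ q : Fin n, e.symm (inr p) ≤ e.symm (inr q)) :
    ∀ q : Fin n, p < q →
      e.symm (inr ⟨q.val - 1, Nat.lt_of_le_of_lt (Nat.sub_le _ _) q.isLt⟩) < e.symm (inr q) := by
  suffices H : ∀ i : ℕ, ∀ q : Fin n, p < q → (e.symm (inr q)).val = i →
      e.symm (inr ⟨q.val - 1, Nat.lt_of_le_of_lt (Nat.sub_le _ _) q.isLt⟩) < e.symm (inr q) by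
    exact fun q hq => H _ q hq rfl
  intro i
  induction i using Nat.strong_induction_on with
  | _ i IH =>
    intro q hq hiq
    have hne : (e.symm (inr q)).val ≠ 0 := by
      intro h0
      have h1 : e.symm (inr q) ≤ e.symm (inr p) := by
        rw [Fin.le_def, h0]; exact Nat.zero_le _
      have h2 : inr p = (inr q : Fin m ⊕ Fin n) :=
        e.symm.injective (le_antisymm (hmin q) h1)
      simp only [inr.injEq] at h2
      exact absurd h2 hq.ne
    obtain ⟨j, hj, hadj⟩ := hP (e.symm (inr q)) hne
    rw [e.apply_symm_apply] at hadj
    cases hx : e j with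
    | inl u =>
      rw [hx, adj_inl_inr] at hadj
      have : q.val = 0 := by rw [hadj.2]
      have : p.val < q.val := hq
      omega
    | inr q' =>
      rw [hx, adj_inr_inr] at hadj
      have hj' : e.symm (inr q') = j := by rw [← hx, e.symm_apply_apply]
      rcases hadj with h1 | h2
      · have hq1 : (⟨q.val - 1, Nat.lt_of_le_of_lt (Nat.sub_le _ _) q.isLt⟩ : Fin n) = q' :=
          Fin.ext (by simp; omega)
        rw [hq1, hj']
        exact hj
      · have hq' : p < q' := by rw [Fin.lt_def] at hq ⊢; omega
        have hlt : (e.symm (inr q')).val < i := by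
          rw [hj', ← hiq]; exact hj
        have h3 := IH _ hlt q' hq' rfl
        have hqq : (⟨q'.val - 1, Nat.lt_of_le_of_lt (Nat.sub_le _ _) q'.isLt⟩ : Fin n) = q :=
          Fin.ext (by simp; omega)
        rw [hqq] at h3
        exact absurd (h3.trans (hj'.symm ▸ hj)) (lt_irrefl _)

lemma keyL (hP : Pd (GG hm hn) e) {p : Fin n}
    (hmin : ∀ q : Fin n, e.symm (inr p) ≤ e.symm (inr q))
    (hab : e.symm (inr ⟨0, hn⟩) < e.symm (inl ⟨0, hm⟩)) :
    ∀ q : Fin n, ∀ _hqp : q < p,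
      e.symm (inr ⟨q.val + 1, by omega⟩) < e.symm (inr q) := by
  suffices H : ∀ i : ℕ, ∀ q : Fin n, ∀ _hqp : q < p, (e.symm (inr q)).val = i →
      e.symm (inr ⟨q.val + 1, by omega⟩) < e.symm (inr q) by
    exact fun q hq => H _ q hq rfl
  intro i
  induction i using Nat.strong_induction_on with
  | _ i IH =>
    intro q hq hiq
    have hne : (e.symm (inr q)).val ≠ 0 := by
      intro h0
      have h1 : e.symm (inr q) ≤ e.symm (inr p) := by
        rw [Fin.le_def, h0]; exact Nat.zero_le _
      have h2 : inr p = (inr q : Fin m ⊕ Fin n) :=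
        e.symm.injective (le_antisymm (hmin q) h1)
      simp only [inr.injEq] at h2
      exact absurd h2 hq.ne'
    obtain ⟨j, hj, hadj⟩ := hP (e.symm (inr q)) hne
    rw [e.apply_symm_apply] at hadj
    cases hx : e j with
    | inl u =>
      rw [hx, adj_inl_inr] at hadj
      -- u = a, q = b; so t (inl a) = j < t (inr b), contradicting hab
      have hja : e.symm (inl ⟨0, hm⟩) = j := by rw [← hadj.1, ← hx, e.symm_apply_apply]
      rw [hadj.2, ← hja] at hj
      exact absurd (hab.trans hj) (lt_irrefl _)
    | inr q' =>
      rw [hx, adj_inr_inr] at hadj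
      have hj' : e.symm (inr q') = j := by rw [← hx, e.symm_apply_apply]
      rcases hadj with h2 | h1
      · -- q'.val + 1 = q.val : q' = q - 1, earlier; use IH to derive contradiction
        have hq' : q' < p := by rw [Fin.lt_def] at hq ⊢; omega
        have hlt : (e.symm (inr q')).val < i := by rw [hj', ← hiq]; exact hj
        have h3 := IH _ hlt q' hq' rfl
        have hqq : (⟨q'.val + 1, by omega⟩ : Fin n) = q := Fin.ext (by simp; omega)
        rw [hqq] at h3
        exact absurd (h3.trans (hj'.symm ▸ hj)) (lt_irrefl _)
      · have hq1 : (⟨q.val + 1, by omega⟩ : Fin n) = q' := Fin.ext (by simp; omega)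
        rw [hq1, hj']
        exact hj

lemma chainR {p : Fin n}
    (hkey : ∀ q : Fin n, p < q →
      e.symm (inr ⟨q.val - 1, Nat.lt_of_le_of_lt (Nat.sub_le _ _) q.isLt⟩) < e.symm (inr q)) :
    ∀ q q' : Fin n, p ≤ q → q < q' → e.symm (inr q) < e.symm (inr q') := by
  suffices H : ∀ d : ℕ, ∀ q q' : Fin n, p ≤ q → q'.val = q.val + d + 1 →
      e.symm (inr q) < e.symm (inr q') by
    intro q q' hpq hqq'
    exact H (q'.val - q.val - 1) q q' hpq (by rw [Fin.lt_def] at hqq'; omega)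
  intro d
  induction d with
  | zero =>
    intro q q' hpq hd
    have h1 := hkey q' (by rw [Fin.lt_def]; rw [Fin.le_def] at hpq; omega)
    have h2 : (⟨q'.val - 1, Nat.lt_of_le_of_lt (Nat.sub_le _ _) q'.isLt⟩ : Fin n) = q :=
      Fin.ext (by simp; omega)
    rwa [h2] at h1
  | succ d IH =>
    intro q q' hpq hd
    have hq'' : q.val + d + 1 < n := by omega
    have h1 := IH q ⟨q.val + d + 1, hq''⟩ hpq (by simp)
    have h2 := hkey q' (by rw [Fin.lt_def]; rw [Fin.le_def] at hpq; omega)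
    have h3 : (⟨q'.val - 1, Nat.lt_of_le_of_lt (Nat.sub_le _ _) q'.isLt⟩ : Fin n)
        = ⟨q.val + d + 1, hq''⟩ := Fin.ext (by simp; omega)
    rw [h3] at h2
    exact h1.trans h2

lemma chainL {p : Fin n}
    (hkey : ∀ q : Fin n, ∀ _hqp : q < p,
      e.symm (inr ⟨q.val + 1, by omega⟩) < e.symm (inr q)) :
    ∀ q q' : Fin n, q < q' → q' ≤ p → e.symm (inr q') < e.symm (inr q) := by
  suffices H : ∀ d : ℕ, ∀ q q' : Fin n, q' ≤ p → q'.val = q.val + d + 1 →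
      e.symm (inr q') < e.symm (inr q) by
    intro q q' hqq' hq'p
    exact H (q'.val - q.val - 1) q q' hq'p (by rw [Fin.lt_def] at hqq'; omega)
  intro d
  induction d with
  | zero =>
    intro q q' hq'p hd
    have h1 := hkey q (by rw [Fin.lt_def]; rw [Fin.le_def] at hq'p; omega)
    have h2 : (⟨q.val + 1, by omega⟩ : Fin n) = q' := Fin.ext (by simp; omega)
    rwa [h2] at h1
  | succ d IH =>
    intro q q' hq'p hd
    have hq'' : q.val + 1 < n := by omega
    have h2 := hkey q (by rw [Fin.lt_def]; rw [Fin.le_def] at hq'p; omega)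
    have h1 := IH ⟨q.val + 1, hq''⟩ q' hq'p (by simp; omega)
    exact h1.trans (by
      have h3 : (⟨q.val + 1, by omega⟩ : Fin n) = ⟨q.val + 1, hq''⟩ := rfl
      exact h3 ▸ h2)


theorem char (hm : 1 ≤ m) (hn : 1 ≤ n) (e : Fin (m + n) ≃ (Fin m ⊕ Fin n)) :
    Pd (GG hm hn) e ↔ CondA hm hn e ∨ CondB hm hn e := by
  constructor
  · intro hP
    cases h0 : e (zz m n hm) with
    | inl c =>
      left
      obtain ⟨p₀, -, hmin'⟩ := Finset.exists_min_image (univ : Finset (Fin n))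
        (fun q => e.symm (inr q)) ⟨⟨0, hn⟩, mem_univ _⟩
      have hmin : ∀ q : Fin n, e.symm (inr p₀) ≤ e.symm (inr q) := fun q => hmin' q (mem_univ q)
      have hne : (e.symm (inr p₀)).val ≠ 0 := by
        intro h
        have h1 : e.symm (inr p₀) = zz m n hm := Fin.ext h
        have h2 : inr p₀ = e (zz m n hm) := by rw [← h1, e.apply_symm_apply]
        rw [h0] at h2; simp at h2
      obtain ⟨j, hj, hadj⟩ := hP _ hne
      rw [e.apply_symm_apply] at hadj
      cases hx : e j with
      | inr q' =>
        rw [hx, adj_inr_inr] at hadj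
        have hj' : e.symm (inr q') = j := by rw [← hx, e.symm_apply_apply]
        have h3 := hmin q'
        rw [hj'] at h3
        exact absurd (h3.trans_lt hj) (lt_irrefl _)
      | inl u =>
        rw [hx, adj_inl_inr] at hadj
        obtain ⟨hu, hb⟩ := hadj
        have hja : e.symm (inl ⟨0, hm⟩) = j := by rw [← hu, ← hx, e.symm_apply_apply]
        have hab : e.symm (inl ⟨0, hm⟩) < e.symm (inr ⟨0, hn⟩) := by
          rw [hja, ← hb]; exact hj
        have hchain := chainR (e := e) (keyR hP hmin)
        refine ⟨⟨c, h0⟩, ?_, hab⟩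
        intro q q' hqq'
        refine hchain q q' ?_ hqq'
        rw [Fin.le_def, hb]
        exact Nat.zero_le _
    | inr p =>
      right
      have ht0 : e.symm (inr p) = zz m n hm := by rw [← h0, e.symm_apply_apply]
      have hmin : ∀ q : Fin n, e.symm (inr p) ≤ e.symm (inr q) := fun q => by
        rw [ht0, Fin.le_def]; exact Nat.zero_le _
      obtain ⟨c₀, -, hcmin'⟩ := Finset.exists_min_image (univ : Finset (Fin m))
        (fun c => e.symm (inl c)) ⟨⟨0, hm⟩, mem_univ _⟩
      have hcmin : ∀ c, e.symm (inl c₀) ≤ e.symm (inl c) := fun c => hcmin' c (mem_univ c)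
      have hcne : (e.symm (inl c₀)).val ≠ 0 := by
        intro h
        have h1 : e.symm (inl c₀) = zz m n hm := Fin.ext h
        have h2 : inl c₀ = e (zz m n hm) := by rw [← h1, e.apply_symm_apply]
        rw [h0] at h2; simp at h2
      obtain ⟨j, hj, hadj⟩ := hP _ hcne
      rw [e.apply_symm_apply] at hadj
      cases hx : e j with
      | inl d =>
        rw [hx, adj_inl_inl] at hadj
        have hj' : e.symm (inl d) = j := by rw [← hx, e.symm_apply_apply]
        have h3 := hcmin d
        rw [hj'] at h3
        exact absurd (h3.trans_lt hj) (lt_irrefl _)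
      | inr w =>
        rw [hx, adj_inr_inl] at hadj
        obtain ⟨hca, hwb⟩ := hadj
        have hjw : e.symm (inr ⟨0, hn⟩) = j := by rw [← hwb, ← hx, e.symm_apply_apply]
        have hab : e.symm (inr ⟨0, hn⟩) < e.symm (inl ⟨0, hm⟩) := by
          rw [hjw, ← hca]; exact hj
        have haX : ∀ c : Fin m, c ≠ ⟨0, hm⟩ → e.symm (inl ⟨0, hm⟩) < e.symm (inl c) := by
          intro c hc
          have h3 := hcmin c
          rw [hca] at h3
          rcases lt_or_eq_of_le h3 with h | h
          · exact h
          · have := e.symm.injective h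
            simp only [inl.injEq] at this
            exact absurd this.symm hc
        exact ⟨p, h0, chainR (keyR hP hmin), chainL (keyL hP hmin hab), hab, haX⟩
  · rintro (⟨⟨c, h0⟩, hsm, hab⟩ | ⟨p, h0, hR, hL, hab, haX⟩) <;> intro i hi
    · -- Case A
      cases hx : e i with
      | inl u =>
        refine ⟨zz m n hm, ?_, ?_⟩
        · rw [Fin.lt_def]; exact Nat.pos_of_ne_zero hi
        · rw [h0, adj_inl_inl]
          intro hcu
          rw [hcu] at h0
          have h2 := e.injective (h0.trans hx.symm)
          exact hi (congrArg Fin.val h2).symm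
      | inr q =>
        have hiq : e.symm (inr q) = i := by rw [← hx, e.symm_apply_apply]
        by_cases hq : q.val = 0
        · refine ⟨e.symm (inl ⟨0, hm⟩), ?_, ?_⟩
          · rw [← hiq]
            have hqb : q = ⟨0, hn⟩ := Fin.ext hq
            rw [hqb]; exact hab
          · rw [e.apply_symm_apply, adj_inl_inr]
            exact ⟨rfl, Fin.ext hq⟩
        · refine ⟨e.symm (inr ⟨q.val - 1, Nat.lt_of_le_of_lt (Nat.sub_le _ _) q.isLt⟩), ?_, ?_⟩
          · rw [← hiq]
            exact hsm (by rw [Fin.lt_def]; simp; omega)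
          · rw [e.apply_symm_apply, adj_inr_inr]
            left; simp; omega
    · -- Case B
      cases hx : e i with
      | inl u =>
        have hiu : e.symm (inl u) = i := by rw [← hx, e.symm_apply_apply]
        by_cases hu : u = ⟨0, hm⟩
        · refine ⟨e.symm (inr ⟨0, hn⟩), ?_, ?_⟩
          · rw [← hiu, hu]; exact hab
          · rw [e.apply_symm_apply, adj_inr_inl]
            exact ⟨hu, rfl⟩
        · refine ⟨e.symm (inl ⟨0, hm⟩), ?_, ?_⟩
          · rw [← hiu]; exact haX u hu
          · rw [e.apply_symm_apply, adj_inl_inl]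
            exact fun h => hu h.symm
      | inr q =>
        have hiq : e.symm (inr q) = i := by rw [← hx, e.symm_apply_apply]
        rcases lt_trichotomy q p with hqp | hqp | hqp
        · have hq1 : q.val + 1 < n := by
            rw [Fin.lt_def] at hqp; omega
          refine ⟨e.symm (inr ⟨q.val + 1, hq1⟩), ?_, ?_⟩
          · rw [← hiq]
            exact hL q ⟨q.val + 1, hq1⟩ (by rw [Fin.lt_def]; simp) (by rw [Fin.le_def] at *; rw [Fin.lt_def] at hqp; simp; omega)
          · rw [e.apply_symm_apply, adj_inr_inr]
            right; simp
        · exfalso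
          rw [hqp, ← h0] at hx
          exact hi (congrArg Fin.val (e.injective hx))
        · have hq0 : q.val ≠ 0 := by rw [Fin.lt_def] at hqp; omega
          refine ⟨e.symm (inr ⟨q.val - 1, Nat.lt_of_le_of_lt (Nat.sub_le _ _) q.isLt⟩), ?_, ?_⟩
          · rw [← hiq]
            exact hR ⟨q.val - 1, _⟩ q (by rw [Fin.le_def] at *; rw [Fin.lt_def] at hqp; simp; omega)
              (by rw [Fin.lt_def]; simp; omega)
          · rw [e.apply_symm_apply, adj_inr_inr]
            left; simp; omega


section Counting

lemma equiv_eq_of_symm {α β : Type*} (e1 e2 : α ≃ β) (h : ∀ x, e1.symm x = e2.symm x) :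
    e1 = e2 := by
  have h2 : e1.symm = e2.symm := Equiv.ext h
  rw [← Equiv.symm_symm e1, ← Equiv.symm_symm e2, h2]

lemma orderEmbOfFin_congr {α : Type*} [LinearOrder α] {s s' : Finset α} {k : ℕ}
    (h : s = s') (hs : s.card = k) (hs' : s'.card = k) (i : Fin k) :
    s.orderEmbOfFin hs i = s'.orderEmbOfFin hs' i := by subst h; rfl

noncomputable def mkE (f : (Fin m ⊕ Fin n) → Fin (m + n)) (hf : Function.Injective f) :
    Fin (m + n) ≃ (Fin m ⊕ Fin n) :=
  (Equiv.ofBijective f ((Fintype.bijective_iff_injective_and_card f).mpr ⟨hf, by simp⟩)).symm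

lemma mkE_symm_apply (f : (Fin m ⊕ Fin n) → Fin (m + n)) (hf : Function.Injective f)
    (x : Fin m ⊕ Fin n) : (mkE f hf).symm x = f x := rfl

lemma card_aNe (hm : 1 ≤ m) : Fintype.card {c : Fin m // c ≠ ⟨0, hm⟩} = m - 1 := by
  simp [Fintype.card_subtype_compl]

variable (hm : 1 ≤ m) (hn : 1 ≤ n)

def Wc (e : Fin (m + n) ≃ (Fin m ⊕ Fin n)) : Finset (Fin (m + n)) :=
  image (fun c : {c : Fin m // c ≠ ⟨0, hm⟩} => e.symm (inl c.1)) univ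

variable {hm hn}

lemma Wc_inj (e : Fin (m + n) ≃ (Fin m ⊕ Fin n)) :
    Function.Injective (fun c : {c : Fin m // c ≠ ⟨0, hm⟩} => e.symm (inl c.1)) := by
  intro c c' h
  have := e.symm.injective h
  simp only [inl.injEq] at this
  exact Subtype.ext this

lemma card_Wc (e : Fin (m + n) ≃ (Fin m ⊕ Fin n)) : (Wc hm e).card = m - 1 := by
  rw [Wc, Finset.card_image_of_injective _ (Wc_inj e), card_univ, card_aNe]

lemma mem_Wc (e : Fin (m + n) ≃ (Fin m ⊕ Fin n)) (c : {c : Fin m // c ≠ ⟨0, hm⟩}) :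
    e.symm (inl c.1) ∈ Wc hm e :=
  mem_image.mpr ⟨c, mem_univ c, rfl⟩

noncomputable def sigOf (e : Fin (m + n) ≃ (Fin m ⊕ Fin n)) :
    {c : Fin m // c ≠ ⟨0, hm⟩} ≃ Fin (m - 1) :=
  Equiv.ofBijective
    (fun c => ((Wc hm e).orderIsoOfFin (card_Wc e)).symm ⟨e.symm (inl c.1), mem_Wc e c⟩)
    ((Fintype.bijective_iff_injective_and_card _).mpr
      ⟨fun c c' h => Wc_inj e (congrArg Subtype.val (((Wc hm e).orderIsoOfFin (card_Wc e)).symm.injective h)),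
        by rw [card_aNe]; simp⟩)

lemma sigOf_spec (e : Fin (m + n) ≃ (Fin m ⊕ Fin n)) (c : {c : Fin m // c ≠ ⟨0, hm⟩}) :
    e.symm (inl c.1) = (Wc hm e).orderEmbOfFin (card_Wc e) (sigOf e c) := by
  rw [← Finset.coe_orderIsoOfFin_apply]
  show _ = (((Wc hm e).orderIsoOfFin (card_Wc e))
    (((Wc hm e).orderIsoOfFin (card_Wc e)).symm ⟨e.symm (inl c.1), mem_Wc e c⟩) : Fin (m + n))
  rw [OrderIso.apply_symm_apply]

lemma sigOf_eq_iff (e : Fin (m + n) ≃ (Fin m ⊕ Fin n)) (c : {c : Fin m // c ≠ ⟨0, hm⟩})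
    (i : Fin (m - 1)) :
    sigOf e c = i ↔ e.symm (inl c.1) = (Wc hm e).orderEmbOfFin (card_Wc e) i := by
  constructor
  · rintro rfl; exact sigOf_spec e c
  · intro h
    have h2 := (sigOf_spec e c).symm.trans h
    exact ((Wc hm e).orderEmbOfFin (card_Wc e)).injective h2

variable (hm hn)

def TA (e : Fin (m + n) ≃ (Fin m ⊕ Fin n)) : Finset (Fin (m + n)) :=
  insert (e.symm (inl ⟨0, hm⟩)) (image (fun q : Fin n => e.symm (inr q)) univ)

variable {hm hn}

lemma card_TA (e : Fin (m + n) ≃ (Fin m ⊕ Fin n)) : (TA hm e).card = n + 1 := by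
  rw [TA, card_insert_of_notMem, card_image_of_injective, card_univ, Fintype.card_fin]
  · exact fun q q' h => by
      have := e.symm.injective h; simpa using this
  · intro h
    obtain ⟨q, -, hq⟩ := mem_image.mp h
    have := e.symm.injective hq
    simp at this

lemma Wc_eq_compl_TA (e : Fin (m + n) ≃ (Fin m ⊕ Fin n)) : Wc hm e = (TA hm e)ᶜ := by
  have hsub : Wc hm e ⊆ (TA hm e)ᶜ := by
    intro x hx
    obtain ⟨c, -, rfl⟩ := mem_image.mp hx
    rw [mem_compl, TA, mem_insert]
    push_neg
    constructor
    · intro h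
      have := e.symm.injective h
      simp only [inl.injEq] at this
      exact c.2 this
    · intro h
      obtain ⟨q, -, hq⟩ := mem_image.mp h
      have := e.symm.injective hq
      simp at this
  apply Finset.eq_of_subset_of_card_le hsub
  rw [card_Wc, Finset.card_compl, card_TA, Fintype.card_fin]
  omega

lemma cardTAc {T : Finset (Fin (m + n))} (hT : T.card = n + 1) : Tᶜ.card = m - 1 := by
  rw [Finset.card_compl, hT, Fintype.card_fin]; omega

def fA (T : Finset (Fin (m + n))) (hT : T.card = n + 1)
    (σ : {c : Fin m // c ≠ ⟨0, hm⟩} ≃ Fin (m - 1)) : (Fin m ⊕ Fin n) → Fin (m + n) :=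
  fun x => match x with
  | inl c => if h : c = ⟨0, hm⟩ then T.orderEmbOfFin hT ⟨0, n.succ_pos⟩
      else Tᶜ.orderEmbOfFin (cardTAc hT) (σ ⟨c, h⟩)
  | inr q => T.orderEmbOfFin hT q.succ

lemma fA_inj (T : Finset (Fin (m + n))) (hT : T.card = n + 1)
    (σ : {c : Fin m // c ≠ ⟨0, hm⟩} ≃ Fin (m - 1)) : Function.Injective (fA (hm := hm) T hT σ) := by
  have hmemT : ∀ j, T.orderEmbOfFin hT j ∈ T := fun j => Finset.orderEmbOfFin_mem _ _ _
  have hmemTc : ∀ j, Tᶜ.orderEmbOfFin (cardTAc hT) j ∈ Tᶜ := fun j => Finset.orderEmbOfFin_mem _ _ _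
  intro x y h
  cases x with
  | inl c =>
    cases y with
    | inl c' =>
      simp only [fA] at h
      by_cases h1 : c = ⟨0, hm⟩ <;> by_cases h2 : c' = ⟨0, hm⟩
      · rw [h1, h2]
      · rw [dif_pos h1, dif_neg h2] at h
        exact absurd (h ▸ hmemT _) (Finset.mem_compl.mp (hmemTc _))
      · rw [dif_neg h1, dif_pos h2] at h
        exact absurd (h.symm ▸ hmemT _) (Finset.mem_compl.mp (hmemTc _))
      · rw [dif_neg h1, dif_neg h2] at h
        have h3 := σ.injective (((Tᶜ).orderEmbOfFin (cardTAc hT)).injective h)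
        simp only [Subtype.mk.injEq] at h3
        rw [h3]
    | inr q =>
      simp only [fA] at h
      by_cases h1 : c = ⟨0, hm⟩
      · rw [dif_pos h1] at h
        have h3 := (T.orderEmbOfFin hT).injective h
        exact absurd h3.symm (Fin.succ_ne_zero q)
      · rw [dif_neg h1] at h
        exact absurd (h ▸ hmemTc (σ ⟨c, h1⟩)) (by simp)
  | inr q =>
    cases y with
    | inl c =>
      simp only [fA] at h
      by_cases h1 : c = ⟨0, hm⟩
      · rw [dif_pos h1] at h
        have h3 := (T.orderEmbOfFin hT).injective h
        exact absurd h3 (Fin.succ_ne_zero q)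
      · rw [dif_neg h1] at h
        exact absurd (h.symm ▸ hmemTc (σ ⟨c, h1⟩)) (by simp)
    | inr q' =>
      simp only [fA] at h
      have h3 := (T.orderEmbOfFin hT).injective h
      rw [Fin.succ_inj] at h3
      rw [h3]

end Counting


lemma TA_emb_eq {e : Fin (m + n) ≃ (Fin m ⊕ Fin n)} (hA : CondA hm hn e) (j : Fin (n + 1)) :
    (TA hm e).orderEmbOfFin (card_TA e) j =
      if h : j.val = 0 then e.symm (inl ⟨0, hm⟩)
      else e.symm (inr ⟨j.val - 1, by have := j.isLt; omega⟩) := by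
  obtain ⟨-, hsm, hab⟩ := hA
  have hu : (fun j : Fin (n + 1) => if h : j.val = 0 then e.symm (inl ⟨0, hm⟩)
      else e.symm (inr ⟨j.val - 1, by have := j.isLt; omega⟩))
      = ⇑((TA hm e).orderEmbOfFin (card_TA e)) := by
    refine Finset.orderEmbOfFin_unique (card_TA e) ?_ ?_
    · intro x
      by_cases hx : x.val = 0
      · rw [dif_pos hx]; exact mem_insert_self _ _
      · rw [dif_neg hx]
        exact mem_insert_of_mem (mem_image.mpr ⟨_, mem_univ _, rfl⟩)
    · intro j j' hjj'
      dsimp only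
      rw [Fin.lt_def] at hjj'
      by_cases hj : j.val = 0 <;> by_cases hj' : j'.val = 0
      · omega
      · rw [dif_pos hj, dif_neg hj']
        refine hab.trans_le (hsm.monotone ?_)
        rw [Fin.le_def]; exact Nat.zero_le _
      · omega
      · rw [dif_neg hj, dif_neg hj']
        exact hsm (by rw [Fin.lt_def]; simp; omega)
  exact (congrFun hu j).symm

lemma condA_mkE (T : Finset (Fin (m + n))) (hT : T.card = n + 1)
    (σ : {c : Fin m // c ≠ ⟨0, hm⟩} ≃ Fin (m - 1)) (hn : 1 ≤ n) :
    CondA hm hn (mkE (fA T hT σ) (fA_inj T hT σ)) := by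
  set e := mkE (fA (hm := hm) T hT σ) (fA_inj T hT σ) with he
  refine ⟨?_, ?_, ?_⟩
  · cases h : e (zz m n hm) with
    | inl c => exact ⟨c, rfl⟩
    | inr q =>
      exfalso
      have h2 : e.symm (inr q) = zz m n hm := by rw [Equiv.symm_apply_eq, h]
      have h3 : e.symm (inr q) = T.orderEmbOfFin hT q.succ := rfl
      have h4 := (T.orderEmbOfFin hT).strictMono
        (show (⟨0, n.succ_pos⟩ : Fin (n + 1)) < q.succ by
          rw [Fin.lt_def]; simp [Fin.val_succ])
      rw [h3] at h2
      rw [Fin.lt_def] at h4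
      have h5 := congrArg Fin.val h2
      simp [zz] at h5
      omega
  · intro q q' hqq'
    show fA T hT σ (inr q) < fA T hT σ (inr q')
    exact (T.orderEmbOfFin hT).strictMono (Fin.succ_lt_succ_iff.mpr hqq')
  · show fA T hT σ (inl ⟨0, hm⟩) < fA T hT σ (inr ⟨0, hn⟩)
    simp only [fA]
    rw [dif_pos trivial]
    exact (T.orderEmbOfFin hT).strictMono (by rw [Fin.lt_def]; simp [Fin.val_succ])

noncomputable def equivA : {e : Fin (m + n) ≃ (Fin m ⊕ Fin n) // CondA hm hn e} ≃
    ({T : Finset (Fin (m + n)) // T.card = n + 1} ×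
      ({c : Fin m // c ≠ ⟨0, hm⟩} ≃ Fin (m - 1))) where
  toFun x := (⟨TA hm x.1, card_TA x.1⟩, sigOf x.1)
  invFun y := ⟨mkE (fA y.1.1 y.1.2 y.2) (fA_inj _ _ _), condA_mkE _ _ _ hn⟩
  left_inv := by
    rintro ⟨e, hA⟩
    apply Subtype.ext
    apply equiv_eq_of_symm
    intro x
    show fA (TA hm e) (card_TA e) (sigOf e) x = e.symm x
    cases x with
    | inl c =>
      by_cases hc : c = ⟨0, hm⟩
      · simp only [fA]
        rw [dif_pos hc, TA_emb_eq hA, dif_pos rfl, hc]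
      · simp only [fA]
        rw [dif_neg hc,
          orderEmbOfFin_congr (Wc_eq_compl_TA e).symm (cardTAc (card_TA e)) (card_Wc e)]
        exact (sigOf_spec e ⟨c, hc⟩).symm
    | inr q =>
      simp only [fA]
      rw [TA_emb_eq hA, dif_neg (by simp [Fin.val_succ])]
      exact congrArg e.symm (congrArg inr (Fin.ext (by simp)))
  right_inv := by
    rintro ⟨⟨T, hT⟩, σ⟩
    set e := mkE (fA (hm := hm) T hT σ) (fA_inj T hT σ) with he
    have hTA : TA hm e = T := by
      apply Finset.eq_of_subset_of_card_le
      · intro x hx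
        rw [TA, mem_insert] at hx
        rcases hx with h | h
        · have : e.symm (inl ⟨0, hm⟩) = T.orderEmbOfFin hT ⟨0, n.succ_pos⟩ := by
            show fA T hT σ (inl ⟨0, hm⟩) = _
            simp only [fA]; rw [dif_pos trivial]
          rw [h, this]; exact Finset.orderEmbOfFin_mem _ _ _
        · obtain ⟨q, -, rfl⟩ := mem_image.mp h
          show fA T hT σ (inr q) ∈ T
          exact Finset.orderEmbOfFin_mem _ _ _
      · rw [card_TA, hT]
    have hWc : Wc hm e = Tᶜ := (Wc_eq_compl_TA e).trans (by rw [hTA])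
    refine Prod.ext ?_ ?_
    · exact Subtype.ext hTA
    · apply Equiv.ext
      intro c
      rw [sigOf_eq_iff, orderEmbOfFin_congr hWc (card_Wc e) (by rw [hWc] at *; exact cardTAc hT)]
      show fA T hT σ (inl c.1) = _
      simp only [fA]
      rw [dif_neg c.2]

lemma cardA : Nat.card {e : Fin (m + n) ≃ (Fin m ⊕ Fin n) // CondA hm hn e} =
    (m + n).choose (n + 1) * (m - 1).factorial := by
  classical
  rw [Nat.card_congr (equivA (hm := hm) (hn := hn)), Nat.card_eq_fintype_card,
    Fintype.card_prod, Fintype.card_finset_len,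
    Fintype.card_equiv (Fintype.equivFinOfCardEq (card_aNe hm)), card_aNe hm, Fintype.card_fin]


section CaseB

lemma shaux (x : Fin (m + n - 1)) : x.val + 1 < m + n := by have := x.isLt; omega

def sh (x : Fin (m + n - 1)) : Fin (m + n) := ⟨x.val + 1, shaux x⟩

variable (hm hn)

def ush (x : Fin (m + n)) : Fin (m + n - 1) :=
  ⟨x.val - 1, by have := x.isLt; omega⟩

lemma fBaux0 (hm : 1 ≤ m) (p : Fin n) : p.val < m + p.val := by omega

lemma fBaux1 (hm : 1 ≤ m) (p : Fin n) (j : Fin (m - 1)) :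
    p.val + 1 + j.val < m + p.val := by have := j.isLt; omega

lemma fBaux2 (hm : 1 ≤ m) (p q : Fin n) : p.val - 1 - q.val < m + p.val := by omega

lemma fBaux3 (q p : Fin n) (h : q.val ≠ p.val) (h2 : ¬ q.val < p.val) :
    q.val - p.val - 1 < n - 1 - p.val := by have := q.isLt; omega

lemma fBaux4 (hm : 1 ≤ m) (hn : 1 ≤ n) : 0 < m + n := by omega

variable {hm hn}

lemma ush_sh (x : Fin (m + n - 1)) : ush hm hn (sh x) = x := Fin.ext (by simp [sh, ush])

lemma sh_ush {x : Fin (m + n)} (hx : x.val ≠ 0) : sh (ush hm hn x) = x :=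
  Fin.ext (by simp [sh, ush]; omega)

lemma sh_val (x : Fin (m + n - 1)) : (sh x).val = x.val + 1 := rfl

lemma sh_injective : Function.Injective (sh (m := m) (n := n)) := by
  intro a b hab
  have := congrArg Fin.val hab
  simp [sh] at this
  exact Fin.ext this

lemma sh_lt_sh {a b : Fin (m + n - 1)} (h : a < b) : sh a < sh b := by
  rw [Fin.lt_def] at h ⊢; simp [sh]; omega

lemma ush_lt_ush {a b : Fin (m + n)} (ha : a.val ≠ 0) (h : a < b) :
    ush hm hn a < ush hm hn b := by
  rw [Fin.lt_def] at h ⊢; simp [ush]; omega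

lemma cardRc (p : Fin n) {R : Finset (Fin (m + n - 1))} (hR : R.card = n - 1 - p.val) :
    Rᶜ.card = m + p.val := by
  rw [Finset.card_compl, hR, Fintype.card_fin]
  have := p.isLt
  omega

variable (hm hn)

def fB (p : Fin n) (R : Finset (Fin (m + n - 1))) (hR : R.card = n - 1 - p.val)
    (σ : {c : Fin m // c ≠ ⟨0, hm⟩} ≃ Fin (m - 1)) : (Fin m ⊕ Fin n) → Fin (m + n) :=
  fun x => match x with
  | inl c =>
    if h : c = ⟨0, hm⟩ then sh (Rᶜ.orderEmbOfFin (cardRc p hR) ⟨p.val, fBaux0 hm p⟩)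
    else sh (Rᶜ.orderEmbOfFin (cardRc p hR)
      ⟨p.val + 1 + (σ ⟨c, h⟩).val, fBaux1 hm p (σ ⟨c, h⟩)⟩)
  | inr q =>
    if h : q = p then ⟨0, fBaux4 hm hn⟩
    else if h2 : q.val < p.val then
      sh (Rᶜ.orderEmbOfFin (cardRc p hR) ⟨p.val - 1 - q.val, fBaux2 hm p q⟩)
    else
      sh (R.orderEmbOfFin hR ⟨q.val - p.val - 1,
        fBaux3 q p (fun hh => h (Fin.ext hh)) h2⟩)

variable {hm hn}

lemma fB_inj (p : Fin n) (R : Finset (Fin (m + n - 1))) (hR : R.card = n - 1 - p.val)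
    (σ : {c : Fin m // c ≠ ⟨0, hm⟩} ≃ Fin (m - 1)) :
    Function.Injective (fB hm hn p R hR σ) := by
  have hres : ∀ (i : Fin (m + p.val)) (j : Fin (n - 1 - p.val)),
      Rᶜ.orderEmbOfFin (cardRc p hR) i ≠ R.orderEmbOfFin hR j := by
    intro i j hij
    have h1 := Finset.orderEmbOfFin_mem Rᶜ (cardRc p hR) i
    rw [hij] at h1
    exact (Finset.mem_compl.mp h1) (Finset.orderEmbOfFin_mem _ _ _)
  have hcinj : ∀ (i i' : Fin (m + p.val)),
      Rᶜ.orderEmbOfFin (cardRc p hR) i = Rᶜ.orderEmbOfFin (cardRc p hR) i' → i = i' :=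
    fun i i' h => (Rᶜ.orderEmbOfFin (cardRc p hR)).injective h
  have hshz : ∀ (y : Fin (m + n - 1)), sh y ≠ ⟨0, by omega⟩ := by
    intro y hy
    have := congrArg Fin.val hy
    simp [sh] at this
  intro x y h
  cases x with
  | inl c =>
    cases y with
    | inl c' =>
      simp only [fB] at h
      by_cases h1 : c = ⟨0, hm⟩ <;> by_cases h2 : c' = ⟨0, hm⟩
      · rw [h1, h2]
      · rw [dif_pos h1, dif_neg h2] at h
        have h3 := congrArg Fin.val (hcinj _ _ (sh_injective h))
        simp at h3
        omega
      · rw [dif_neg h1, dif_pos h2] at h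
        have h3 := congrArg Fin.val (hcinj _ _ (sh_injective h))
        simp at h3
        omega
      · rw [dif_neg h1, dif_neg h2] at h
        have h3 := congrArg Fin.val (hcinj _ _ (sh_injective h))
        simp at h3
        have h4 := σ.injective (Fin.ext h3)
        simp only [Subtype.mk.injEq] at h4
        rw [h4]
    | inr q =>
      simp only [fB] at h
      by_cases hq : q = p
      · rw [dif_pos hq] at h
        split_ifs at h <;> exact absurd h (hshz _)
      · rw [dif_neg hq] at h
        by_cases hq2 : q.val < p.val
        · rw [dif_pos hq2] at h
          split_ifs at h with h1
          · have h3 := congrArg Fin.val (hcinj _ _ (sh_injective h))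
            simp at h3; omega
          · have h3 := congrArg Fin.val (hcinj _ _ (sh_injective h))
            simp at h3; omega
        · rw [dif_neg hq2] at h
          split_ifs at h <;> exact absurd (sh_injective h) (hres _ _)
  | inr q =>
    cases y with
    | inl c =>
      simp only [fB] at h
      by_cases hq : q = p
      · rw [dif_pos hq] at h
        split_ifs at h <;> exact absurd h.symm (hshz _)
      · rw [dif_neg hq] at h
        by_cases hq2 : q.val < p.val
        · rw [dif_pos hq2] at h
          split_ifs at h with h1
          · have h3 := congrArg Fin.val (hcinj _ _ (sh_injective h))
            simp at h3; omega
          · have h3 := congrArg Fin.val (hcinj _ _ (sh_injective h))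
            simp at h3; omega
        · rw [dif_neg hq2] at h
          split_ifs at h <;> exact absurd (sh_injective h).symm (hres _ _)
    | inr q' =>
      simp only [fB] at h
      by_cases hq : q = p <;> by_cases hq' : q' = p
      · rw [hq, hq']
      · rw [dif_pos hq, dif_neg hq'] at h
        split_ifs at h <;> exact absurd h.symm (hshz _)
      · rw [dif_neg hq, dif_pos hq'] at h
        split_ifs at h <;> exact absurd h (hshz _)
      · rw [dif_neg hq, dif_neg hq'] at h
        have hqv : q.val ≠ p.val := fun hh => hq (Fin.ext hh)
        have hqv' : q'.val ≠ p.val := fun hh => hq' (Fin.ext hh)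
        by_cases hq2 : q.val < p.val <;> by_cases hq2' : q'.val < p.val
        · rw [dif_pos hq2, dif_pos hq2'] at h
          have h3 := congrArg Fin.val (hcinj _ _ (sh_injective h))
          simp at h3
          exact congrArg inr (Fin.ext (by omega))
        · rw [dif_pos hq2, dif_neg hq2'] at h
          exact absurd (sh_injective h) (hres _ _)
        · rw [dif_neg hq2, dif_pos hq2'] at h
          exact absurd (sh_injective h).symm (hres _ _)
        · rw [dif_neg hq2, dif_neg hq2'] at h
          have h3 := congrArg Fin.val ((R.orderEmbOfFin hR).injective (sh_injective h))
          simp at h3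
          exact congrArg inr (Fin.ext (by omega))

end CaseB


set_option maxHeartbeats 2000000 in
lemma condB_mkE (hn : 1 ≤ n) (p : Fin n) (R : Finset (Fin (m + n - 1)))
    (hR : R.card = n - 1 - p.val) (σ : {c : Fin m // c ≠ ⟨0, hm⟩} ≃ Fin (m - 1)) :
    CondB hm hn (mkE (fB hm hn p R hR σ) (fB_inj p R hR σ)) := by
  set e := mkE (fB hm hn p R hR σ) (fB_inj p R hR σ) with he
  have hsymm : ∀ x, e.symm x = fB hm hn p R hR σ x := fun _ => rfl
  have hEp : fB hm hn p R hR σ (inr p) = ⟨0, fBaux4 hm hn⟩ := by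
    simp only [fB]; rw [dif_pos trivial]
  have hEa : fB hm hn p R hR σ (inl ⟨0, hm⟩)
      = sh (Rᶜ.orderEmbOfFin (cardRc p hR) ⟨p.val, fBaux0 hm p⟩) := by
    simp only [fB]; rw [dif_pos trivial]
  refine ⟨p, ?_, ?_, ?_, ?_, ?_⟩
  · have h1 : e.symm (inr p) = zz m n hm := by
      rw [hsymm, hEp]; rfl
    exact ((Equiv.symm_apply_eq e).mp h1).symm
  · intro q q' hpq hqq'
    rw [hsymm, hsymm]
    rw [Fin.le_def] at hpq
    rw [Fin.lt_def] at hqq'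
    have hq' : q' ≠ p := fun hh => by rw [hh] at hqq'; omega
    have hq'2 : ¬ q'.val < p.val := by omega
    have hE1 : fB hm hn p R hR σ (inr q') = sh (R.orderEmbOfFin hR ⟨q'.val - p.val - 1,
        fBaux3 q' p (fun hh => hq' (Fin.ext hh)) hq'2⟩) := by
      simp only [fB]; rw [dif_neg hq', dif_neg hq'2]
    rw [hE1]
    by_cases hqp : q = p
    · rw [hqp, hEp, Fin.lt_def, sh_val]
      exact Nat.succ_pos _
    · have hqv : q.val ≠ p.val := fun hh => hqp (Fin.ext hh)
      have hq2 : ¬ q.val < p.val := by omega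
      have hE2 : fB hm hn p R hR σ (inr q) = sh (R.orderEmbOfFin hR ⟨q.val - p.val - 1,
          fBaux3 q p (fun hh => hqp (Fin.ext hh)) hq2⟩) := by
        simp only [fB]; rw [dif_neg hqp, dif_neg hq2]
      rw [hE2]
      apply sh_lt_sh
      apply (R.orderEmbOfFin hR).strictMono
      rw [Fin.lt_def]
      simp
      omega
  · intro q q' hqq' hq'p
    rw [hsymm, hsymm]
    rw [Fin.lt_def] at hqq'
    rw [Fin.le_def] at hq'p
    have hq : q ≠ p := fun hh => by rw [hh] at hqq'; omega
    have hq2 : q.val < p.val := by omega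
    have hE2 : fB hm hn p R hR σ (inr q)
        = sh (Rᶜ.orderEmbOfFin (cardRc p hR) ⟨p.val - 1 - q.val, fBaux2 hm p q⟩) := by
      simp only [fB]; rw [dif_neg hq, dif_pos hq2]
    rw [hE2]
    by_cases hq'2 : q' = p
    · rw [hq'2, hEp, Fin.lt_def, sh_val]
      exact Nat.succ_pos _
    · have hq'v : q'.val < p.val := by
        have : q'.val ≠ p.val := fun hh => hq'2 (Fin.ext hh)
        omega
      have hE1 : fB hm hn p R hR σ (inr q')
          = sh (Rᶜ.orderEmbOfFin (cardRc p hR) ⟨p.val - 1 - q'.val, fBaux2 hm p q'⟩) := by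
        simp only [fB]; rw [dif_neg hq'2, dif_pos hq'v]
      rw [hE1]
      apply sh_lt_sh
      apply (Rᶜ.orderEmbOfFin (cardRc p hR)).strictMono
      rw [Fin.lt_def]
      simp
      omega
  · rw [hsymm, hsymm, hEa]
    by_cases hbp : (⟨0, hn⟩ : Fin n) = p
    · rw [show fB hm hn p R hR σ (inr ⟨0, hn⟩) = fB hm hn p R hR σ (inr p) from by rw [hbp], hEp]
      rw [Fin.lt_def, sh_val]
      exact Nat.succ_pos _
    · have hbv : (0 : ℕ) < p.val := by
        have : (0 : ℕ) ≠ p.val := fun hh => hbp (Fin.ext hh)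
        omega
      have hE1 : fB hm hn p R hR σ (inr ⟨0, hn⟩)
          = sh (Rᶜ.orderEmbOfFin (cardRc p hR) ⟨p.val - 1 - 0, fBaux2 hm p ⟨0, hn⟩⟩) := by
        simp only [fB]; rw [dif_neg hbp, dif_pos hbv]
      rw [hE1]
      apply sh_lt_sh
      apply (Rᶜ.orderEmbOfFin (cardRc p hR)).strictMono
      rw [Fin.lt_def]
      simp
      omega
  · intro c hc
    rw [hsymm, hsymm, hEa]
    rw [show fB hm hn p R hR σ (inl c)
      = sh (Rᶜ.orderEmbOfFin (cardRc p hR)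
          ⟨p.val + 1 + (σ ⟨c, hc⟩).val, fBaux1 hm p (σ ⟨c, hc⟩)⟩) from by
      simp only [fB]; rw [dif_neg hc]]
    apply sh_lt_sh
    apply (Rᶜ.orderEmbOfFin (cardRc p hR)).strictMono
    rw [Fin.lt_def]
    simp
    omega


section CaseBExtract

variable {e : Fin (m + n) ≃ (Fin m ⊕ Fin n)} {p : Fin n}

lemma tner (h0 : e (zz m n hm) = inr p) {q : Fin n} (hq : q ≠ p) :
    (e.symm (inr q)).val ≠ 0 := by
  intro h
  have h1 : e.symm (inr q) = zz m n hm := Fin.ext h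
  have h2 : inr q = e (zz m n hm) := by rw [← h1, e.apply_symm_apply]
  rw [h0] at h2
  simp only [inr.injEq] at h2
  exact hq h2

lemma tnel (hn : 1 ≤ n) (h0 : e (zz m n hm) = inr p) (c : Fin m) :
    (e.symm (inl c)).val ≠ 0 := by
  intro h
  have h1 : e.symm (inl c) = zz m n hm := Fin.ext h
  have h2 : inl c = e (zz m n hm) := by rw [← h1, e.apply_symm_apply]
  rw [h0] at h2
  simp at h2

lemma Wc_mem_elim {x : Fin (m + n)} (hx : x ∈ Wc hm e) :
    ∃ c : {c : Fin m // c ≠ ⟨0, hm⟩}, e.symm (inl c.1) = x := by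
  simp only [Wc, mem_image] at hx
  obtain ⟨c, -, hc⟩ := hx
  exact ⟨c, hc⟩

lemma Wc_val_ne (hn : 1 ≤ n) (h0 : e (zz m n hm) = inr p) (j : Fin (m - 1)) :
    ((Wc hm e).orderEmbOfFin (card_Wc e) j).val ≠ 0 := by
  obtain ⟨c, hc⟩ := Wc_mem_elim (Finset.orderEmbOfFin_mem (Wc hm e) (card_Wc e) j)
  rw [← hc]
  exact tnel hn h0 c.1

lemma ush_inj_nz {x y : Fin (m + n)} (hx : x.val ≠ 0) (hy : y.val ≠ 0)
    (h : ush hm hn x = ush hm hn y) : x = y := by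
  have h2 := congrArg Fin.val h
  simp [ush] at h2
  exact Fin.ext (by omega)

lemma RBaux (p : Fin n) (i : Fin (n - 1 - p.val)) : p.val + 1 + i.val < n := by
  have := i.isLt; omega

variable (hm hn)

/-- the right part data extracted from `e` -/
def RB (e : Fin (m + n) ≃ (Fin m ⊕ Fin n)) (p : Fin n) : Finset (Fin (m + n - 1)) :=
  image (fun i : Fin (n - 1 - p.val) =>
    ush hm hn (e.symm (inr ⟨p.val + 1 + i.val, RBaux p i⟩))) univ

variable {hm hn}

lemma RB_map_inj (hn : 1 ≤ n) (h0 : e (zz m n hm) = inr p) :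
    Function.Injective (fun i : Fin (n - 1 - p.val) =>
      ush hm hn (e.symm (inr ⟨p.val + 1 + i.val, RBaux p i⟩))) := by
  intro i i' h
  have hne : (⟨p.val + 1 + i.val, RBaux p i⟩ : Fin n) ≠ p := fun hh => by
    have := congrArg Fin.val hh; simp at this; omega
  have hne' : (⟨p.val + 1 + i'.val, RBaux p i'⟩ : Fin n) ≠ p := fun hh => by
    have := congrArg Fin.val hh; simp at this; omega
  have h2 := ush_inj_nz (tner h0 hne) (tner h0 hne') h
  have h3 := e.symm.injective h2
  simp only [inr.injEq, Fin.mk.injEq] at h3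
  exact Fin.ext (by omega)

lemma card_RB (hn : 1 ≤ n) (h0 : e (zz m n hm) = inr p) :
    (RB hm hn e p).card = n - 1 - p.val := by
  rw [RB, Finset.card_image_of_injective _ (RB_map_inj hn h0), card_univ, Fintype.card_fin]

lemma RB_emb (hn : 1 ≤ n) (h0 : e (zz m n hm) = inr p)
    (hRc : ∀ q q' : Fin n, p ≤ q → q < q' → e.symm (inr q) < e.symm (inr q')) :
    (fun i : Fin (n - 1 - p.val) =>
      ush hm hn (e.symm (inr ⟨p.val + 1 + i.val, RBaux p i⟩)))
      = ⇑((RB hm hn e p).orderEmbOfFin (card_RB hn h0)) := by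
  refine Finset.orderEmbOfFin_unique _ ?_ ?_
  · intro i
    exact mem_image.mpr ⟨i, mem_univ i, rfl⟩
  · intro i i' hii'
    rw [Fin.lt_def] at hii'
    have hne : (⟨p.val + 1 + i.val, RBaux p i⟩ : Fin n) ≠ p := fun hh => by
      have := congrArg Fin.val hh; simp at this; omega
    refine ush_lt_ush (tner h0 hne) ?_
    refine hRc _ _ ?_ ?_
    · rw [Fin.le_def]; simp; omega
    · rw [Fin.lt_def]; simp; omega

lemma gBaux1 (p : Fin n) (i : Fin (m + p.val)) : p.val - 1 - i.val < n := by
  have := p.isLt; omega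

lemma gBaux2 (p : Fin n) (i : Fin (m + p.val)) (h : ¬ i.val < p.val) (h2 : ¬ i.val = p.val) :
    i.val - p.val - 1 < m - 1 := by have := i.isLt; omega

variable (hm hn)

/-- the enumeration of the complement of `RB` -/
def gB (e : Fin (m + n) ≃ (Fin m ⊕ Fin n)) (p : Fin n) (i : Fin (m + p.val)) :
    Fin (m + n - 1) :=
  if h : i.val < p.val then ush hm hn (e.symm (inr ⟨p.val - 1 - i.val, gBaux1 p i⟩))
  else if h2 : i.val = p.val then ush hm hn (e.symm (inl ⟨0, hm⟩))
  else ush hm hn ((Wc hm e).orderEmbOfFin (card_Wc e) ⟨i.val - p.val - 1, gBaux2 p i h h2⟩)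

variable {hm hn}

lemma a_lt_Wc (haX : ∀ c : Fin m, c ≠ ⟨0, hm⟩ → e.symm (inl ⟨0, hm⟩) < e.symm (inl c))
    (j : Fin (m - 1)) :
    e.symm (inl ⟨0, hm⟩) < (Wc hm e).orderEmbOfFin (card_Wc e) j := by
  obtain ⟨c, hc⟩ := Wc_mem_elim (Finset.orderEmbOfFin_mem (Wc hm e) (card_Wc e) j)
  rw [← hc]
  exact haX c.1 c.2

lemma L_lt_a (hn : 1 ≤ n)
    (hLc : ∀ q q' : Fin n, q < q' → q' ≤ p → e.symm (inr q') < e.symm (inr q))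
    (hab : e.symm (inr ⟨0, hn⟩) < e.symm (inl ⟨0, hm⟩))
    {q : Fin n} (hq : q ≤ p) : e.symm (inr q) < e.symm (inl ⟨0, hm⟩) := by
  by_cases hq0 : q = ⟨0, hn⟩
  · rw [hq0]; exact hab
  · refine lt_trans ?_ hab
    refine hLc ⟨0, hn⟩ q ?_ hq
    rw [Fin.lt_def]
    have : q.val ≠ 0 := fun hh => hq0 (Fin.ext hh)
    simp; omega

lemma gB_emb (hn : 1 ≤ n) (h0 : e (zz m n hm) = inr p)
    (hLc : ∀ q q' : Fin n, q < q' → q' ≤ p → e.symm (inr q') < e.symm (inr q))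
    (hab : e.symm (inr ⟨0, hn⟩) < e.symm (inl ⟨0, hm⟩))
    (haX : ∀ c : Fin m, c ≠ ⟨0, hm⟩ → e.symm (inl ⟨0, hm⟩) < e.symm (inl c)) :
    gB hm hn e p = ⇑(((RB hm hn e p)ᶜ).orderEmbOfFin (cardRc p (card_RB hn h0))) := by
  refine Finset.orderEmbOfFin_unique _ ?_ ?_
  · intro i
    rw [Finset.mem_compl]
    intro hmem
    rw [RB] at hmem
    obtain ⟨j, -, hj⟩ := mem_image.mp hmem
    have hnej : (⟨p.val + 1 + j.val, RBaux p j⟩ : Fin n) ≠ p := fun hh => by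
      have := congrArg Fin.val hh; simp at this; omega
    rw [gB] at hj
    split_ifs at hj with h1 h2
    · have hne1 : (⟨p.val - 1 - i.val, gBaux1 p i⟩ : Fin n) ≠ p := fun hh => by
        have := congrArg Fin.val hh; simp at this; omega
      have h3 := e.symm.injective (ush_inj_nz (tner h0 hnej) (tner h0 hne1) hj)
      simp only [inr.injEq, Fin.mk.injEq] at h3
      omega
    · have h3 := e.symm.injective (ush_inj_nz (tner h0 hnej) (tnel hn h0 _) hj)
      simp at h3
    · obtain ⟨c, hc⟩ := Wc_mem_elim (Finset.orderEmbOfFin_mem (Wc hm e) (card_Wc e)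
        ⟨i.val - p.val - 1, gBaux2 p i h1 h2⟩)
      rw [← hc] at hj
      have h3 := e.symm.injective (ush_inj_nz (tner h0 hnej) (tnel hn h0 _) hj)
      simp at h3
  · intro i i' hii'
    rw [Fin.lt_def] at hii'
    rw [gB, gB]
    by_cases h1 : i.val < p.val
    · rw [dif_pos h1]
      have hne1 : (⟨p.val - 1 - i.val, gBaux1 p i⟩ : Fin n) ≠ p := fun hh => by
        have := congrArg Fin.val hh; simp at this; omega
      by_cases h1' : i'.val < p.val
      · rw [dif_pos h1']
        refine ush_lt_ush (tner h0 hne1) ?_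
        refine hLc _ _ ?_ ?_
        · rw [Fin.lt_def]; simp; omega
        · rw [Fin.le_def]; simp; omega
      · have hLa : e.symm (inr ⟨p.val - 1 - i.val, gBaux1 p i⟩) < e.symm (inl ⟨0, hm⟩) :=
          L_lt_a hn hLc hab (by rw [Fin.le_def]; simp; omega)
        by_cases h2' : i'.val = p.val
        · rw [dif_neg h1', dif_pos h2']
          exact ush_lt_ush (tner h0 hne1) hLa
        · rw [dif_neg h1', dif_neg h2']
          exact ush_lt_ush (tner h0 hne1) (hLa.trans (a_lt_Wc haX _))
    · have h2 : ¬ i'.val < p.val := by omega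
      have h2' : ¬ i'.val = p.val := by omega
      rw [dif_neg h2, dif_neg h2']
      by_cases h3 : i.val = p.val
      · rw [dif_neg h1, dif_pos h3]
        exact ush_lt_ush (tnel hn h0 _) (a_lt_Wc haX _)
      · rw [dif_neg h1, dif_neg h3]
        refine ush_lt_ush (Wc_val_ne hn h0 _) ?_
        apply ((Wc hm e).orderEmbOfFin (card_Wc e)).strictMono
        rw [Fin.lt_def]; simp; omega

end CaseBExtract


lemma sigma_mk_eq {p1 p2 : Fin n} (h : p1 = p2)
    (s1 : {R : Finset (Fin (m + n - 1)) // R.card = n - 1 - p1.val})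
    (s2 : {R : Finset (Fin (m + n - 1)) // R.card = n - 1 - p2.val})
    (hs : s1.1 = s2.1) :
    (⟨p1, s1⟩ : Σ p : Fin n, {R : Finset (Fin (m + n - 1)) // R.card = n - 1 - p.val})
      = ⟨p2, s2⟩ := by
  subst h
  exact congrArg _ (Subtype.ext hs)

noncomputable def equivB : {e : Fin (m + n) ≃ (Fin m ⊕ Fin n) // CondB hm hn e} ≃
    ((Σ p : Fin n, {R : Finset (Fin (m + n - 1)) // R.card = n - 1 - p.val}) ×
      ({c : Fin m // c ≠ ⟨0, hm⟩} ≃ Fin (m - 1))) where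
  toFun x := (⟨x.2.choose, ⟨RB hm hn x.1 x.2.choose, card_RB hn x.2.choose_spec.1⟩⟩, sigOf x.1)
  invFun y := ⟨mkE (fB hm hn y.1.1 y.1.2.1 y.1.2.2 y.2) (fB_inj _ _ _ _),
    condB_mkE hn _ _ _ _⟩
  left_inv := by
    rintro ⟨e, hB⟩
    apply Subtype.ext
    apply equiv_eq_of_symm
    intro x
    obtain ⟨h0, hRc, hLc, hab, haX⟩ := hB.choose_spec
    set p := hB.choose with hp
    have hER := RB_emb hn h0 hRc
    have hEC := gB_emb hn h0 hLc hab haX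
    show fB hm hn p (RB hm hn e p) (card_RB hn h0) (sigOf e) x = e.symm x
    cases x with
    | inr q =>
      by_cases hq : q = p
      · rw [hq]
        have hzz : e.symm (inr p) = zz m n hm := (Equiv.symm_apply_eq e).mpr h0.symm
        rw [hzz]
        simp only [fB]
        split_ifs with h
        · rfl
        · exact absurd trivial h
      · have hqv : q.val ≠ p.val := fun hh => hq (Fin.ext hh)
        by_cases hql : q.val < p.val
        · simp only [fB]
          rw [dif_neg hq, dif_pos hql, ← hEC]
          have h5 : gB hm hn e p ⟨p.val - 1 - q.val, fBaux2 hm p q⟩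
              = ush hm hn (e.symm (inr q)) := by
            rw [gB, dif_pos (show p.val - 1 - q.val < p.val by omega)]
            exact congrArg _ (congrArg _ (congrArg _ (Fin.ext (by simp; omega))))
          rw [h5, sh_ush (tner h0 hq)]
        · simp only [fB]
          rw [dif_neg hq, dif_neg hql, ← hER]
          have h6 : ∀ r : Fin n, r = q →
              sh (ush hm hn (e.symm (inr r))) = e.symm (inr q) := by
            rintro r rfl
            exact sh_ush (tner h0 hq)
          exact h6 _ (Fin.ext (by simp; omega))
    | inl c =>
      by_cases hc : c = ⟨0, hm⟩
      · rw [hc]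
        simp only [fB]
        split_ifs with h
        · rw [← hEC]
          have h6 : gB hm hn e p ⟨p.val, fBaux0 hm p⟩
              = ush hm hn (e.symm (inl ⟨0, hm⟩)) := by
            rw [gB, dif_neg (lt_irrefl _), dif_pos rfl]
          rw [h6, sh_ush (tnel hn h0 _)]
        · exact absurd trivial h
      · simp only [fB]
        rw [dif_neg hc, ← hEC]
        have h6 : ∀ j : Fin (m - 1), j = sigOf e ⟨c, hc⟩ →
            ush hm hn ((Wc hm e).orderEmbOfFin (card_Wc e) j)
              = ush hm hn (e.symm (inl c)) := by
          rintro j rfl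
          rw [← sigOf_spec e ⟨c, hc⟩]
        have h8 : gB hm hn e p ⟨p.val + 1 + (sigOf e ⟨c, hc⟩).val, fBaux1 hm p _⟩
            = ush hm hn (e.symm (inl c)) := by
          rw [gB, dif_neg (show ¬ p.val + 1 + (sigOf e ⟨c, hc⟩).val < p.val by omega),
            dif_neg (show ¬ p.val + 1 + (sigOf e ⟨c, hc⟩).val = p.val by omega)]
          exact h6 _ (Fin.ext (show p.val + 1 + ((sigOf e) ⟨c, hc⟩).val - p.val - 1
              = ((sigOf e) ⟨c, hc⟩).val by omega))
        rw [h8, sh_ush (tnel hn h0 _)]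
  right_inv := by
    rintro ⟨⟨p, R, hR⟩, σ⟩
    set e := mkE (fB hm hn p R hR σ) (fB_inj p R hR σ) with he
    have h0 : e (zz m n hm) = inr p := by
      have h1 : e.symm (inr p) = zz m n hm := by
        show fB hm hn p R hR σ (inr p) = _
        simp only [fB]
        split_ifs with h
        · rfl
        · exact absurd trivial h
      exact ((Equiv.symm_apply_eq e).mp h1).symm
    have hp' : (condB_mkE (hm := hm) hn p R hR σ).choose = p := by
      have h2 := (condB_mkE (hm := hm) hn p R hR σ).choose_spec.1
      have h3 := h0.symm.trans h2
      simp only [inr.injEq] at h3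
      exact h3.symm
    have hRB : ∀ p'' : Fin n, p = p'' → RB hm hn e p'' = R := by
      rintro p'' rfl
      apply Finset.eq_of_subset_of_card_le
      · intro x hx
        simp only [RB, mem_image] at hx
        obtain ⟨i, -, hi⟩ := hx
        rw [← hi]
        have hq : (⟨p.val + 1 + i.val, RBaux p i⟩ : Fin n) ≠ p := fun hh => by
          have := congrArg Fin.val hh; simp at this; omega
        have hql : ¬ (p.val + 1 + i.val < p.val) := by omega
        show ush hm hn (fB hm hn p R hR σ (inr ⟨p.val + 1 + i.val, RBaux p i⟩)) ∈ R
        have hfB : fB hm hn p R hR σ (inr ⟨p.val + 1 + i.val, RBaux p i⟩)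
            = sh (R.orderEmbOfFin hR ⟨p.val + 1 + i.val - p.val - 1,
                fBaux3 _ p (fun hh => hq (Fin.ext hh)) hql⟩) := by
          simp only [fB]
          rw [dif_neg hq, dif_neg hql]
        rw [hfB, ush_sh]
        exact Finset.orderEmbOfFin_mem _ _ _
      · rw [card_RB hn h0, hR]
    have hWemb : ⇑((Wc hm e).orderEmbOfFin (card_Wc e))
        = fun j : Fin (m - 1) =>
          sh (Rᶜ.orderEmbOfFin (cardRc p hR) ⟨p.val + 1 + j.val, fBaux1 hm p j⟩) := by
      symm
      refine Finset.orderEmbOfFin_unique _ ?_ ?_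
      · intro j
        have hc := (σ.symm j).2
        have hfB : fB hm hn p R hR σ (inl (σ.symm j).1)
            = sh (Rᶜ.orderEmbOfFin (cardRc p hR)
                ⟨p.val + 1 + (σ ⟨(σ.symm j).1, hc⟩).val, fBaux1 hm p _⟩) := by
          simp only [fB]
          rw [dif_neg hc]
        have hσ : σ ⟨(σ.symm j).1, hc⟩ = j := by
          rw [show (⟨(σ.symm j).1, hc⟩ : {c : Fin m // c ≠ ⟨0, hm⟩}) = σ.symm j from rfl]
          exact σ.apply_symm_apply j
        have hval : sh (Rᶜ.orderEmbOfFin (cardRc p hR) ⟨p.val + 1 + j.val, fBaux1 hm p j⟩)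
            = e.symm (inl (σ.symm j).1) := by
          show _ = fB hm hn p R hR σ (inl (σ.symm j).1)
          rw [hfB]
          exact congrArg _ (congrArg _ (Fin.ext (by rw [hσ]))).symm
        rw [hval]
        exact mem_Wc e (σ.symm j)
      · intro j j' hjj'
        rw [Fin.lt_def] at hjj'
        apply sh_lt_sh
        apply (Rᶜ.orderEmbOfFin (cardRc p hR)).strictMono
        rw [Fin.lt_def]
        simp
        omega
    refine Prod.ext ?_ ?_
    · exact sigma_mk_eq hp' _ _ (hRB _ hp'.symm)
    · apply Equiv.ext
      intro c
      show sigOf e c = σ c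
      rw [sigOf_eq_iff]
      rw [show ⇑((Wc hm e).orderEmbOfFin (card_Wc e)) = _ from hWemb]
      show fB hm hn p R hR σ (inl c.1) = _
      simp only [fB]
      rw [dif_neg c.2]


lemma cardB : Nat.card {e : Fin (m + n) ≃ (Fin m ⊕ Fin n) // CondB hm hn e}
    = (∑ k ∈ Finset.range n, (m + n - 1).choose (k + m)) * (m - 1).factorial := by
  classical
  rw [Nat.card_congr (equivB (hm := hm) (hn := hn)), Nat.card_eq_fintype_card,
    Fintype.card_prod, Fintype.card_sigma,
    Fintype.card_equiv (Fintype.equivFinOfCardEq (card_aNe hm)), card_aNe hm]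
  congr 1
  rw [← Fin.sum_univ_eq_sum_range (fun k => (m + n - 1).choose (k + m)) n]
  apply Finset.sum_congr rfl
  intro p _
  rw [Fintype.card_finset_len, Fintype.card_fin]
  have h1 : n - 1 - p.val = (m + n - 1) - (p.val + m) := by have := p.isLt; omega
  rw [h1, Nat.choose_symm (by have := p.isLt; omega)]

open Classical in
noncomputable def orSplit {α : Type*} (p q : α → Prop) (h : ∀ a, p a → q a → False) :
    {x // p x ∨ q x} ≃ ({x // p x} ⊕ {x // q x}) where
  toFun x := if hp : p x.1 then Sum.inl ⟨x.1, hp⟩ else Sum.inr ⟨x.1, x.2.resolve_left hp⟩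
  invFun y := Sum.elim (fun a => ⟨a.1, Or.inl a.2⟩) (fun b => ⟨b.1, Or.inr b.2⟩) y
  left_inv x := by
    by_cases hp : p x.1
    · simp only [dif_pos hp, Sum.elim_inl]
    · simp only [dif_neg hp, Sum.elim_inr]
  right_inv y := by
    rcases y with a | b
    · simp only [Sum.elim_inl, dif_pos a.2]
      exact dif_pos a.2
    · simp only [Sum.elim_inr]
      exact dif_neg (fun hp => h b.1 hp b.2)

theorem final (hm : 1 ≤ m) (hn : 1 ≤ n) :
    rwlCount (GG hm hn) =
      (m - 1).factorial *
        (Nat.choose (m + n) (n + 1) +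
          ∑ k ∈ Finset.range n, Nat.choose (m + n - 1) (k + m)) := by
  classical
  rw [rwlCount_eq_card (GG hm hn) (by simp : Fintype.card (Fin m ⊕ Fin n) = m + n)]
  have hdisj : ∀ e : Fin (m + n) ≃ (Fin m ⊕ Fin n),
      CondA hm hn e → CondB hm hn e → False := by
    intro e hA hB
    obtain ⟨c, hc⟩ := hA.1
    obtain ⟨p, hp, -⟩ := hB
    rw [hc] at hp
    simp at hp
  have h1 : Nat.card {e : Fin (m + n) ≃ (Fin m ⊕ Fin n) // Pd (GG hm hn) e}
      = Nat.card {e : Fin (m + n) ≃ (Fin m ⊕ Fin n) //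
          CondA hm hn e ∨ CondB hm hn e} :=
    Nat.card_congr (Equiv.subtypeEquivRight (fun e => by rw [← char hm hn e]))
  rw [h1, Nat.card_congr (orSplit _ _ hdisj), Nat.card_eq_fintype_card,
    Fintype.card_sum, ← Nat.card_eq_fintype_card, ← Nat.card_eq_fintype_card,
    cardA, cardB]
  ring

end RWL

theorem rwlCount_lollipop (m n : ℕ) (hm : 1 ≤ m) (hn : 1 ≤ n) :
    rwlCount (bridgeJoin (⊤ : SimpleGraph (Fin m)) (SimpleGraph.pathGraph n)
        ⟨0, hm⟩ ⟨0, hn⟩) =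
      (m - 1).factorial *
        (Nat.choose (m + n) (n + 1) +
          ∑ k ∈ Finset.range n, Nat.choose (m + n - 1) (k + m)) := by
  exact RWL.final hm hn
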